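/- Let D₁, D₂, D₃ be diagonal real 6×6 matrices whose diagonal entries all lie in {1, −1} and each of which has an even number of entries equal to −1 (so D₁, D₂, D₃ ∈ SO(6)). Then there exist indices i ≠ j such that the k-th matrix has equal (i,i) and (j,j) entries for every k ∈ {1,2,3}; consequently there exists a nonzero skew-symmetric real 6×6 matrix M with Dₖ·M = M·Dₖ for k = 1, 2, 3. -/

import Mathlib

open Matrix

/-- For any three sign vectors `v₁, v₂, v₃ ∈ {1,−1}⁶`, each with an even number of entries
equal to `−1` (so that the corresponding diagonal matrices lie in `SO(6)`), there are indices
`i ≠ j` on which all three vectors agree; consequently there is a nonzero skew-symmetric real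
`6×6` matrix commuting with the three diagonal matrices `diag(vₖ)`. -/
theorem stmt15 (v : Fin 3 → Fin 6 → ℝ)
    (hpm : ∀ k i, v k i = 1 ∨ v k i = -1)
    (heven : ∀ k, Even (Finset.univ.filter (fun i => v k i = -1)).card) :
    (∃ i j : Fin 6, i ≠ j ∧ ∀ k, v k i = v k j) ∧
    (∃ M : Matrix (Fin 6) (Fin 6) ℝ, M ≠ 0 ∧ Mᵀ = -M ∧
      ∀ k, Matrix.diagonal (v k) * M = M * Matrix.diagonal (v k)) := by
  have h1 : ∃ i j : Fin 6, i ≠ j ∧ ∀ k, v k i = v k j := by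
    by_contra hcon
    push_neg at hcon
    set f : Fin 6 → (Fin 3 → Bool) := fun i k => decide (v k i = -1) with hf
    have hinj : Function.Injective f := by
      intro i j hij
      by_contra hne
      obtain ⟨k, hk⟩ := hcon i j hne
      have := congrFun hij k
      simp only [hf, decide_eq_decide] at this
      rcases hpm k i with h1 | h1 <;> rcases hpm k j with h2 | h2 <;>
        simp [h1, h2] at this hk <;> norm_num at this
    set S : Finset (Fin 3 → Bool) := Finset.univ.image f with hS
    have hcardS : S.card = 6 := by
      rw [hS, Finset.card_image_of_injective _ hinj, Finset.card_univ]; rfl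
    have hcardT : Sᶜ.card = 2 := by
      have := Finset.card_compl S
      rw [hcardS] at this
      simpa using this
    obtain ⟨a, b, hab, hT⟩ := Finset.card_eq_two.mp hcardT
    have hkey : ∀ k, a k = b k := by
      intro k
      have htot : (Finset.univ.filter (fun p : Fin 3 → Bool => p k = true)).card = 4 := by
        revert k; decide
      have hsplit : (S.filter (fun p => p k = true)).card
          + (Sᶜ.filter (fun p => p k = true)).card = 4 := by
        rw [← htot, ← Finset.card_union_of_disjoint
          (Finset.disjoint_filter_filter (disjoint_compl_right))]
        congr 1
        rw [← Finset.filter_union, Finset.union_compl]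
      have hSeven : Even (S.filter (fun p => p k = true)).card := by
        have himg : (S.filter (fun p => p k = true))
            = (Finset.univ.filter (fun i => f i k = true)).image f := by
          rw [hS, Finset.filter_image]
        have hc : (S.filter (fun p => p k = true)).card
            = (Finset.univ.filter (fun i => f i k = true)).card := by
          rw [himg, Finset.card_image_of_injective _ hinj]
        rw [hc]
        have hpred : (Finset.univ.filter (fun i => f i k = true))
            = (Finset.univ.filter (fun i => v k i = -1)) := by
          apply Finset.filter_congr; intro i _; simp [hf]
        rw [hpred]; exact heven k
      have hTeven : Even (Sᶜ.filter (fun p => p k = true)).card := by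
        have h4 : Even ((S.filter (fun p => p k = true)).card
            + (Sᶜ.filter (fun p => p k = true)).card) := by
          rw [hsplit]; decide
        exact (Nat.even_add.mp h4).mp hSeven
      rw [hT] at hTeven
      rcases ha : a k <;> rcases hb : b k
      · rfl
      · exfalso
        simp only [Finset.filter_insert, Finset.filter_singleton, ha, hb,
          if_true, if_false] at hTeven
        simp at hTeven
      · exfalso
        simp only [Finset.filter_insert, Finset.filter_singleton, ha, hb,
          if_true, if_false] at hTeven
        simp at hTeven
      · rfl
    exact hab (funext hkey)
  refine ⟨h1, ?_⟩
  obtain ⟨i, j, hij, hagree⟩ := h1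
  refine ⟨Matrix.of (fun a b => if a = i ∧ b = j then (1:ℝ) else if a = j ∧ b = i then -1 else 0),
    ?_, ?_, ?_⟩
  · intro h
    have := congrFun (congrFun h i) j
    simp [hij] at this
  · ext a b
    simp only [Matrix.transpose_apply, Matrix.neg_apply, Matrix.of_apply]
    by_cases ha : a = i <;> by_cases hb : b = j <;> by_cases ha2 : a = j <;>
      by_cases hb2 : b = i <;> simp_all
  · intro k
    ext a b
    rw [Matrix.diagonal_mul, Matrix.mul_diagonal]
    by_cases h1 : a = i ∧ b = j
    · obtain ⟨rfl, rfl⟩ := h1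
      simp only [Matrix.of_apply]
      simp only [and_self, if_true]
      rw [hagree k]; ring
    by_cases h2 : a = j ∧ b = i
    · obtain ⟨rfl, rfl⟩ := h2
      simp only [Matrix.of_apply]
      simp only [and_self, if_true]
      rw [hagree k]; ring
    · simp only [Matrix.of_apply, if_neg h1, if_neg h2]
      ring
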